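/- (Theorem 6, asymptotic optimal worst-case rate) Let 0 < α < β and let g_M(0) = T_M(−(β+α)/(β−α)) where T_M is the M-th Chebyshev polynomial of the first kind, and let γ*_M = 1/|g_M(0)| be the optimal worst-case per-period convergence rate over [α, β]. Then lim_{M→∞} |g_M(0)|^{1/M} = (√(β/α) + 1)/(√(β/α) − 1), and consequently lim_{M→∞} (γ*_M)^{1/M} = (√(β/α) − 1)/(√(β/α) + 1); i.e., the optimal worst-case asymptotic convergence rate over all time-varying gain sequences for graphs with nonzero Laplacian spectrum in [α, β] equals (√(β/α) − 1)/(√(β/α) + 1). -/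

import Mathlib

open Polynomial Filter

lemma cheb_eval_aux (z : ℝ) (hz : z ≠ 0) : ∀ n : ℕ,
    (Polynomial.Chebyshev.T ℝ (n : ℤ)).eval ((z + z⁻¹) / 2) = (z ^ n + z⁻¹ ^ n) / 2 := by
  intro n
  induction n using Nat.twoStepInduction with
  | zero => simp [Polynomial.Chebyshev.T_zero]
  | one => simp [Polynomial.Chebyshev.T_one]
  | more n ih1 ih2 =>
    have : ((n : ℤ) + 2) = ((n + 2 : ℕ) : ℤ) := by push_cast; ring
    rw [← this, Polynomial.Chebyshev.T_add_two]
    have h1 : ((n : ℤ) + 1) = ((n + 1 : ℕ) : ℤ) := by push_cast; ring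
    simp only [Polynomial.eval_sub, Polynomial.eval_mul, Polynomial.eval_ofNat,
      Polynomial.eval_X, h1, ih1, ih2]
    field_simp
    linear_combination (z⁻¹ ^ n * (z - z⁻¹)) * (mul_inv_cancel₀ hz)

lemma main_lim (r : ℝ) (hr : 1 < r) :
    Tendsto (fun M : ℕ => ((r ^ M + r⁻¹ ^ M) / 2) ^ ((M : ℝ)⁻¹)) atTop (nhds r) := by
  have hr0 : 0 < r := lt_trans one_pos hr
  have hinv : Tendsto (fun M : ℕ => ((M : ℝ)⁻¹)) atTop (nhds 0) :=
    tendsto_inv_atTop_zero.comp tendsto_natCast_atTop_atTop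
  -- lower bound function tends to r
  have hlow : Tendsto (fun M : ℕ => (r ^ M / 2) ^ ((M : ℝ)⁻¹)) atTop (nhds r) := by
    have h2 : Tendsto (fun M : ℕ => ((2 : ℝ)⁻¹) ^ ((M : ℝ)⁻¹)) atTop (nhds 1) := by
      have := (Real.continuousAt_const_rpow (a := (2:ℝ)⁻¹) (b := (0:ℝ)) (by norm_num)).tendsto.comp hinv
      simpa [Function.comp_def] using this
    have heq : ∀ᶠ M : ℕ in atTop, r * ((2 : ℝ)⁻¹) ^ ((M : ℝ)⁻¹)
        = (r ^ M / 2) ^ ((M : ℝ)⁻¹) := by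
      filter_upwards [eventually_ge_atTop 1] with M hM
      have hM0 : (M : ℝ) ≠ 0 := by positivity
      rw [div_eq_mul_inv, Real.mul_rpow (by positivity) (by positivity),
        ← Real.rpow_natCast r M, ← Real.rpow_mul hr0.le,
        mul_inv_cancel₀ hM0, Real.rpow_one]
    have := (tendsto_const_nhds.mul h2 : Tendsto (fun M : ℕ => r * ((2:ℝ)⁻¹) ^ ((M:ℝ)⁻¹)) atTop (nhds (r * 1)))
    rw [mul_one] at this
    exact this.congr' heq
  -- upper bound function tends to r
  have hup : Tendsto (fun M : ℕ => ((r ^ M : ℝ)) ^ ((M : ℝ)⁻¹)) atTop (nhds r) := by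
    have heq : ∀ᶠ M : ℕ in atTop, r = ((r ^ M : ℝ)) ^ ((M : ℝ)⁻¹) := by
      filter_upwards [eventually_ge_atTop 1] with M hM
      have hM0 : (M : ℝ) ≠ 0 := by positivity
      rw [← Real.rpow_natCast r M, ← Real.rpow_mul hr0.le, mul_inv_cancel₀ hM0, Real.rpow_one]
    exact tendsto_const_nhds.congr' heq
  refine tendsto_of_tendsto_of_tendsto_of_le_of_le' hlow hup ?_ ?_
  · filter_upwards with M
    apply Real.rpow_le_rpow (by positivity) _ (by positivity)
    have : (0:ℝ) ≤ r⁻¹ ^ M := by positivity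
    linarith
  · filter_upwards with M
    apply Real.rpow_le_rpow (by positivity) _ (by positivity)
    have h1 : r⁻¹ ≤ r := le_trans (inv_le_one_of_one_le₀ hr.le) hr.le
    have : r⁻¹ ^ M ≤ r ^ M := pow_le_pow_left₀ (by positivity) h1 M
    linarith

theorem stmt_19 (α β : ℝ) (hα : 0 < α) (hαβ : α < β) :
    Tendsto (fun M : ℕ =>
        |(Polynomial.Chebyshev.T ℝ (M : ℤ)).eval (-(β + α) / (β - α))| ^ ((M : ℝ)⁻¹))
      atTop
      (nhds ((Real.sqrt (β / α) + 1) / (Real.sqrt (β / α) - 1))) ∧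
    Tendsto (fun M : ℕ =>
        (1 / |(Polynomial.Chebyshev.T ℝ (M : ℤ)).eval (-(β + α) / (β - α))|) ^ ((M : ℝ)⁻¹))
      atTop
      (nhds ((Real.sqrt (β / α) - 1) / (Real.sqrt (β / α) + 1))) := by
  set s := Real.sqrt (β / α) with hs
  have hdivpos : 0 < β / α := div_pos (lt_trans hα hαβ) hα
  have hs1 : 1 < s := by
    rw [hs, show (1:ℝ) = Real.sqrt 1 by simp]
    exact Real.sqrt_lt_sqrt (by norm_num) ((one_lt_div hα).mpr hαβ)
  have hs2 : s ^ 2 = β / α := Real.sq_sqrt hdivpos.le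
  set r := (s + 1) / (s - 1) with hrdef
  have hr1 : 1 < r := (one_lt_div (by linarith)).mpr (by linarith)
  have hr0 : 0 < r := lt_trans one_pos hr1
  have hz : (-r : ℝ) ≠ 0 := by
    simp only [neg_ne_zero]; exact hr0.ne'
  -- the evaluation point
  have hpoint : -(β + α) / (β - α) = ((-r) + (-r)⁻¹) / 2 := by
    have hs1' : s - 1 ≠ 0 := by linarith
    have hs1'' : s + 1 ≠ 0 := by linarith
    have hβα : β - α ≠ 0 := by linarith
    have hα' : α ≠ 0 := hα.ne'
    have hβα2 : β / α - 1 ≠ 0 := by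
      have : 1 < β / α := (one_lt_div hα).mpr hαβ
      linarith
    rw [hrdef]
    rw [inv_neg, inv_div]
    have hβs : α * s ^ 2 = β := by
      rw [hs2]; field_simp
    field_simp
    nlinarith [hβs]
  have habs : ∀ M : ℕ,
      |(Polynomial.Chebyshev.T ℝ (M : ℤ)).eval (-(β + α) / (β - α))|
        = (r ^ M + r⁻¹ ^ M) / 2 := by
    intro M
    rw [hpoint, cheb_eval_aux (-r) hz M]
    have h1 : ((-r) ^ M + (-r)⁻¹ ^ M) = (-1) ^ M * (r ^ M + r⁻¹ ^ M) := by
      rw [inv_neg]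
      rw [neg_pow r M, neg_pow r⁻¹ M]
      ring
    rw [h1, abs_div, abs_mul, abs_pow, abs_neg, abs_one, one_pow, one_mul]
    rw [abs_of_nonneg (by positivity), abs_of_nonneg (by positivity : (0:ℝ) ≤ (2:ℝ))]
  have hmain : Tendsto (fun M : ℕ =>
      |(Polynomial.Chebyshev.T ℝ (M : ℤ)).eval (-(β + α) / (β - α))| ^ ((M : ℝ)⁻¹))
      atTop (nhds r) := by
    have := main_lim r hr1
    refine this.congr fun M => ?_
    rw [habs M]
  constructor
  · exact hmain
  · have hrinv : ((s - 1) / (s + 1)) = r⁻¹ := by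
      rw [hrdef, inv_div]
    rw [hrinv]
    have h2 : Tendsto (fun M : ℕ =>
        (|(Polynomial.Chebyshev.T ℝ (M : ℤ)).eval (-(β + α) / (β - α))| ^ ((M : ℝ)⁻¹))⁻¹)
        atTop (nhds r⁻¹) := hmain.inv₀ hr0.ne'
    refine h2.congr fun M => ?_
    rw [one_div, ← Real.inv_rpow (abs_nonneg _)]
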